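/- For all m ≥ 1 and n ≥ 1, A(B^m(A(n))) = F_{2m+2}·A(n) + F_{2m+1}·n − F_{2m+1}, where A(n) = ⌊nφ⌋ and B(n) = ⌊nφ²⌋. -/

import Mathlib

noncomputable def phi : ℝ := (1 + Real.sqrt 5) / 2

/-- Lower Wythoff sequence. -/
noncomputable def A (n : ℕ) : ℕ := (⌊(n : ℝ) * phi⌋).toNat

/-- Upper Wythoff sequence. -/
noncomputable def B (n : ℕ) : ℕ := (⌊(n : ℝ) * phi ^ 2⌋).toNat

/-- `d` is the digit sequence of the Zeckendorf expansion of `N`: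
digits are 0/1, no two consecutive 1's, finitely many nonzero digits,
and `N = Σ dᵢ · F_{i+2}`. -/
def IsZeck (N : ℕ) (d : ℕ → ℕ) : Prop :=
  (∀ i, d i ≤ 1) ∧ (∀ i, ¬(d i = 1 ∧ d (i + 1) = 1)) ∧
  (Function.support d).Finite ∧ N = ∑ᶠ i, d i * Nat.fib (i + 2)

lemma sqrt5_sq : Real.sqrt 5 ^ 2 = 5 := Real.sq_sqrt (by norm_num)

lemma phi_gt : 1 < phi := by
  unfold phi; nlinarith [sqrt5_sq, Real.sqrt_nonneg 5]

lemma phi_lt : phi < 2 := by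
  unfold phi; nlinarith [sqrt5_sq, Real.sqrt_nonneg 5]

lemma phi_sq : phi ^ 2 = phi + 1 := by
  unfold phi; nlinarith [sqrt5_sq]

lemma irr_phi : Irrational phi := by
  have h5 : Irrational (Real.sqrt 5) := by
    simpa using (Nat.Prime.irrational_sqrt (p := 5) (by norm_num))
  have h1 : Irrational (1 + Real.sqrt 5) := by
    simpa using h5.ratCast_add 1
  simpa [phi] using h1.div_natCast (m := 2) (by norm_num)

lemma A_int (k : ℕ) : (A k : ℤ) = ⌊(k : ℝ) * phi⌋ := by
  unfold A
  exact Int.toNat_of_nonneg (Int.floor_nonneg.mpr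
    (mul_nonneg (by positivity) (by linarith [phi_gt])))

lemma A_real (k : ℕ) : (A k : ℝ) = (k : ℝ) * phi - Int.fract ((k : ℝ) * phi) := by
  rw [Int.self_sub_fract]
  exact_mod_cast A_int k

lemma fract_bounds (k : ℕ) (hk : 1 ≤ k) :
    0 < Int.fract ((k : ℝ) * phi) ∧ Int.fract ((k : ℝ) * phi) < 1 := by
  refine ⟨?_, Int.fract_lt_one _⟩
  have hirr : Irrational ((k : ℝ) * phi) := irr_phi.natCast_mul (by omega)
  exact Int.fract_pos.mpr (fun h => hirr.ne_int ⌊(k : ℝ) * phi⌋ h)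

lemma B_eq (k : ℕ) : B k = k + A k := by
  have h1 : (k : ℝ) * phi ^ 2 = (k : ℝ) * phi + (k : ℕ) := by
    rw [phi_sq]; ring
  unfold B A
  rw [h1, Int.floor_add_natCast]
  rw [Int.toNat_add (Int.floor_nonneg.mpr
    (mul_nonneg (by positivity) (by linarith [phi_gt]))) (by positivity)]
  simp [Nat.add_comm]

lemma A_ge (n : ℕ) : n ≤ A n := by
  have h : (n : ℤ) ≤ (A n : ℤ) := by
    rw [A_int]
    exact Int.le_floor.mpr (by push_cast; nlinarith [phi_gt, Nat.cast_nonneg (α := ℝ) n])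
  exact_mod_cast h

lemma AB (k : ℕ) (hk : 1 ≤ k) : (A (B k) : ℤ) = (A k : ℤ) + (B k : ℤ) := by
  obtain ⟨hf0, hf1⟩ := fract_bounds k hk
  set f := Int.fract ((k : ℝ) * phi) with hf
  have hBk : (B k : ℝ) = (k : ℝ) + ((k : ℝ) * phi - f) := by
    rw [B_eq k]; push_cast; rw [A_real k]
  have hAk : (A k : ℝ) = (k : ℝ) * phi - f := A_real k
  have hfloor : ⌊(B k : ℝ) * phi⌋ = (A k : ℤ) + (B k : ℤ) := by
    rw [Int.floor_eq_iff]
    constructor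
    · push_cast
      rw [hBk, hAk]
      nlinarith [phi_sq, phi_gt, phi_lt]
    · push_cast
      rw [hBk, hAk]
      nlinarith [phi_sq, phi_gt, phi_lt]
  rw [← hfloor, ← A_int (B k)]

lemma AA (n : ℕ) (hn : 1 ≤ n) : (A (A n) : ℤ) = (A n : ℤ) + (n : ℤ) - 1 := by
  obtain ⟨hf0, hf1⟩ := fract_bounds n hn
  set f := Int.fract ((n : ℝ) * phi) with hf
  have hAn : (A n : ℝ) = (n : ℝ) * phi - f := A_real n
  have hfloor : ⌊(A n : ℝ) * phi⌋ = (A n : ℤ) + (n : ℤ) - 1 := by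
    rw [Int.floor_eq_iff]
    constructor
    · push_cast
      rw [hAn]
      nlinarith [phi_sq, phi_gt, phi_lt]
    · push_cast
      rw [hAn]
      nlinarith [phi_sq, phi_gt, phi_lt]
  rw [← hfloor, ← A_int (A n)]

lemma iter_ge (x m : ℕ) : x ≤ B^[m] x := by
  induction m with
  | zero => simp
  | succ m ih =>
    rw [Function.iterate_succ_apply']
    calc x ≤ B^[m] x := ih
    _ ≤ B (B^[m] x) := by rw [B_eq]; omega

lemma key (x : ℕ) (hx : 1 ≤ x) (m : ℕ) :
    (A (B^[m] x) : ℤ) = Nat.fib (2*m+1) * (A x : ℤ) + Nat.fib (2*m) * (x : ℤ) ∧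
    ((B^[m+1] x : ℕ) : ℤ) = Nat.fib (2*m+2) * (A x : ℤ) + Nat.fib (2*m+1) * (x : ℤ) := by
  induction m with
  | zero =>
    constructor
    · simp [Nat.fib]
    · rw [Function.iterate_one, B_eq]
      push_cast
      simp [Nat.fib]
      ring
  | succ m ih =>
    obtain ⟨ih1, ih2⟩ := ih
    have hge : 1 ≤ B^[m+1] x := le_trans hx (iter_ge x (m+1))
    have hAB : (A (B (B^[m+1] x)) : ℤ) = (A (B^[m+1] x) : ℤ) + (B (B^[m+1] x) : ℤ) :=
      AB _ hge
    have hBB : (B (B^[m+1] x) : ℤ) = (B^[m+1] x : ℤ) + (A (B^[m+1] x) : ℤ) := by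
      rw [B_eq]; push_cast; ring
    have hA1 : (A (B^[m+1] x) : ℤ)
        = Nat.fib (2*(m+1)+1) * (A x : ℤ) + Nat.fib (2*(m+1)) * (x : ℤ) := by
      have e1 : B^[m+1] x = B (B^[m] x) := Function.iterate_succ_apply' B m x
      have hge' : 1 ≤ B^[m] x := le_trans hx (iter_ge x m)
      have hAB' := AB _ hge'
      rw [e1, hAB', ih1, ← e1, ih2]
      have f1 : (Nat.fib (2*(m+1)+1) : ℤ) = Nat.fib (2*m+1) + Nat.fib (2*m+2) := by
        rw [show 2*(m+1)+1 = (2*m+1)+2 from by ring, Nat.fib_add_two]; push_cast; ring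
      have f2 : (Nat.fib (2*(m+1)) : ℤ) = Nat.fib (2*m) + Nat.fib (2*m+1) := by
        rw [show 2*(m+1) = (2*m)+2 from by ring, Nat.fib_add_two]; push_cast; ring
      rw [f1, f2]; ring
    refine ⟨hA1, ?_⟩
    have e2 : B^[m+1+1] x = B (B^[m+1] x) := Function.iterate_succ_apply' B (m+1) x
    rw [e2, hBB, ih2, hA1]
    have f1 : (Nat.fib (2*(m+1)+2) : ℤ) = Nat.fib (2*m+2) + Nat.fib (2*(m+1)+1) := by
      rw [show 2*(m+1)+2 = (2*m+2)+2 from by ring, Nat.fib_add_two,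
        show 2*(m+1)+1 = (2*m+2)+1 from by ring]; push_cast; ring
    have f2 : (Nat.fib (2*(m+1)+1) : ℤ) = Nat.fib (2*m+1) + Nat.fib (2*m+2) := by
      rw [show 2*(m+1)+1 = (2*m+1)+2 from by ring, Nat.fib_add_two]; push_cast; ring
    rw [f1, f2]; ring

/-- A(B^m(A(n))) = F_{2m+2}·A(n) + F_{2m+1}·n − F_{2m+1} for m, n ≥ 1. -/
theorem A_iterate_B_A_formula (m n : ℕ) (hm : 1 ≤ m) (hn : 1 ≤ n) :
    (A (B^[m] (A n)) : ℤ) =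
      Nat.fib (2 * m + 2) * (A n : ℤ) + Nat.fib (2 * m + 1) * (n : ℤ)
        - Nat.fib (2 * m + 1) := by
  have hx : 1 ≤ A n := le_trans hn (A_ge n)
  obtain ⟨h1, _⟩ := key (A n) hx m
  rw [h1, AA n hn]
  have f1 : (Nat.fib (2*m+2) : ℤ) = Nat.fib (2*m) + Nat.fib (2*m+1) := by
    rw [show 2*m+2 = (2*m)+2 from by ring, Nat.fib_add_two]; push_cast; ring
  rw [f1]; ring
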